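/- arXiv:2408.13363 — 2 statements merged into one kernel-verified Lean document; each statement's English description precedes it below -/
import Mathlib

section
/- Let the one-dimensional heat kernel on the torus be η_t(x) = 1 + 2 Σ_{n≥1} e^{-t n²} cos(n x) (Fourier representation). Then for all t > 0 and all x, 0 ≤ η_t(x) ≤ 1 + √(π/t). -/
open Real

open MeasureTheory in
/-- The periodic heat kernel `η_t(x) = 1 + 2 Σ_{n≥1} e^{-t n²} cos (n x)` satisfies
`0 ≤ η_t(x) ≤ 1 + √(π/t)` for all `t > 0` and all `x`. -/
theorem periodic_heat_kernel_bounds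
    (η : ℝ → ℝ → ℝ)
    (hη : ∀ t x, η t x =
      1 + 2 * ∑' n : ℕ, Real.exp (-t * ((n : ℝ) + 1) ^ 2) * Real.cos (((n : ℝ) + 1) * x)) :
    ∀ t : ℝ, 0 < t → ∀ x : ℝ, 0 ≤ η t x ∧ η t x ≤ 1 + Real.sqrt (π / t) := by
  intro t ht x
  have hπ : (0:ℝ) < π := Real.pi_pos
  -- Summability of the Gaussian coefficients over ℕ
  have hgeo : Summable (fun n : ℕ => Real.exp (-t) ^ n) :=
    summable_geometric_of_lt_one (exp_nonneg _) (exp_lt_one_iff.2 (by linarith))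
  have hsumg : Summable (fun n : ℕ => Real.exp (-t * (n:ℝ)^2)) := by
    refine hgeo.of_nonneg_of_le (fun n => (exp_pos _).le) (fun n => ?_)
    rw [← Real.exp_nat_mul]
    apply Real.exp_le_exp.2
    have h1 : (n:ℝ) ≤ (n:ℝ)^2 := by
      have := Nat.le_self_pow (two_ne_zero) n
      exact_mod_cast this
    nlinarith
  have hsumg1 : Summable (fun n : ℕ => Real.exp (-t * ((n:ℝ)+1)^2)) := by
    have h := (summable_nat_add_iff (f := fun n : ℕ => Real.exp (-t * (n:ℝ)^2)) 1).2 hsumg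
    refine h.congr (fun n => ?_)
    push_cast
    ring_nf
  have hsumT : Summable (fun n : ℕ =>
      Real.exp (-t * ((n:ℝ)+1)^2) * Real.cos (((n:ℝ)+1) * x)) := by
    refine Summable.of_norm_bounded hsumg1 (fun n => ?_)
    rw [norm_mul, Real.norm_eq_abs, Real.norm_eq_abs, abs_of_pos (exp_pos _)]
    calc Real.exp (-t * ((n:ℝ)+1)^2) * |Real.cos (((n:ℝ)+1) * x)|
        ≤ Real.exp (-t * ((n:ℝ)+1)^2) * 1 := by
          gcongr; exact abs_cos_le_one _
      _ = _ := mul_one _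
  constructor
  · -- Nonnegativity via Poisson summation / theta transformation
    set a : ℂ := (t:ℂ) / (π:ℂ) with ha_def
    have hπC : (π:ℂ) ≠ 0 := Complex.ofReal_ne_zero.2 hπ.ne'
    have htC : (t:ℂ) ≠ 0 := Complex.ofReal_ne_zero.2 ht.ne'
    have ha : 0 < a.re := by
      rw [ha_def, show (t:ℂ)/(π:ℂ) = ((t/π : ℝ):ℂ) by push_cast; ring]
      simpa using div_pos ht hπ
    set b : ℂ := Complex.I * (x:ℂ) / (2 * (π:ℂ)) with hb_def
    have key := Complex.tsum_exp_neg_quadratic ha b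
    -- LHS terms
    have hLHS : ∀ n : ℤ, Complex.exp (-(π:ℂ) * a * (n:ℂ) ^ 2 + 2 * (π:ℂ) * b * (n:ℂ))
        = Complex.exp (((-t * (n:ℝ)^2 : ℝ):ℂ) + ((x * n : ℝ):ℂ) * Complex.I) := by
      intro n
      congr 1
      rw [ha_def, hb_def]
      push_cast
      field_simp
    -- RHS terms
    have hRHS : ∀ n : ℤ, Complex.exp (-(π:ℂ) / a * ((n:ℂ) + Complex.I * b) ^ 2)
        = ((Real.exp (-(π^2/t) * ((n:ℝ) - x/(2*π))^2) : ℝ) : ℂ) := by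
      intro n
      rw [Complex.ofReal_exp]
      congr 1
      rw [ha_def, hb_def]
      have : Complex.I * (Complex.I * (x:ℂ) / (2 * (π:ℂ))) = -((x:ℂ) / (2 * (π:ℂ))) := by
        rw [← mul_div_assoc, ← mul_assoc, Complex.I_mul_I]; ring
      rw [this]
      push_cast
      field_simp
      ring
    -- Summability of the complex LHS over ℤ
    have hsumZ : Summable (fun n : ℤ => Real.exp (-t * (n:ℝ)^2)) := by
      apply Summable.of_nat_of_neg
      · simpa using hsumg
      · simpa using hsumg
    have hsumG : Summable (fun n : ℤ =>
        Complex.exp (-(π:ℂ) * a * (n:ℂ) ^ 2 + 2 * (π:ℂ) * b * (n:ℂ))) := by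
      refine Summable.of_norm ?_
      have : ∀ n : ℤ, ‖Complex.exp (-(π:ℂ) * a * (n:ℂ) ^ 2 + 2 * (π:ℂ) * b * (n:ℂ))‖
          = Real.exp (-t * (n:ℝ)^2) := by
        intro n
        rw [hLHS n, Complex.norm_exp]
        simp only [Complex.add_re, Complex.mul_re, Complex.ofReal_re, Complex.ofReal_im,
          Complex.I_re, Complex.I_im]
        ring_nf
      simpa only [this] using hsumZ
    -- real part of the LHS
    have hre : ∀ n : ℤ, (Complex.exp (-(π:ℂ) * a * (n:ℂ) ^ 2 + 2 * (π:ℂ) * b * (n:ℂ))).re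
        = Real.exp (-t * (n:ℝ)^2) * Real.cos ((n:ℝ) * x) := by
      intro n
      rw [hLHS n, Complex.exp_re]
      simp only [Complex.add_re, Complex.mul_re, Complex.ofReal_re, Complex.ofReal_im,
        Complex.I_re, Complex.I_im, Complex.add_im, Complex.mul_im]
      ring_nf
    -- the ℤ-sum of real parts equals η t x
    have hs1 : Summable (fun n : ℕ =>
        Real.exp (-t * ((((n:ℤ)+1 : ℤ)):ℝ)^2) * Real.cos (((((n:ℤ)+1 : ℤ)):ℝ) * x)) := by
      refine hsumT.congr (fun n => ?_)
      push_cast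
      ring_nf
    have hs2 : Summable (fun n : ℕ =>
        Real.exp (-t * (((-((n:ℤ)+1) : ℤ)):ℝ)^2) * Real.cos ((((-((n:ℤ)+1) : ℤ)):ℝ) * x)) := by
      refine hsumT.congr (fun n => ?_)
      push_cast
      rw [show (-((n:ℝ)+1)) * x = -(((n:ℝ)+1) * x) by ring, Real.cos_neg, neg_sq]
    have hzsum : (∑' n : ℤ, Real.exp (-t * (n:ℝ)^2) * Real.cos ((n:ℝ) * x)) = η t x := by
      rw [tsum_of_add_one_of_neg_add_one
        (f := fun n : ℤ => Real.exp (-t * (n:ℝ)^2) * Real.cos ((n:ℝ) * x)) hs1 hs2]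
      have e1 : (∑' n : ℕ,
          Real.exp (-t * ((((n:ℤ)+1 : ℤ)):ℝ)^2) * Real.cos (((((n:ℤ)+1 : ℤ)):ℝ) * x))
          = ∑' n : ℕ, Real.exp (-t * ((n:ℝ)+1)^2) * Real.cos (((n:ℝ)+1) * x) := by
        refine tsum_congr (fun n => ?_)
        push_cast
        ring_nf
      have e2 : (∑' n : ℕ,
          Real.exp (-t * (((-((n:ℤ)+1) : ℤ)):ℝ)^2) * Real.cos ((((-((n:ℤ)+1) : ℤ)):ℝ) * x))
          = ∑' n : ℕ, Real.exp (-t * ((n:ℝ)+1)^2) * Real.cos (((n:ℝ)+1) * x) := by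
        refine tsum_congr (fun n => ?_)
        push_cast
        rw [show (-((n:ℝ)+1)) * x = -(((n:ℝ)+1) * x) by ring, Real.cos_neg, neg_sq]
      rw [e1, e2, hη t x]
      have hF0 : Real.exp (-t * (((0:ℤ)):ℝ)^2) * Real.cos ((((0:ℤ)):ℝ) * x) = 1 := by
        norm_num
      rw [hF0]
      ring
    -- real part of the RHS is nonnegative
    have hS : (0:ℝ) ≤ ∑' n : ℤ, Real.exp (-(π^2/t) * ((n:ℝ) - x/(2*π))^2) :=
      tsum_nonneg (fun n => (exp_pos _).le)
    have hrhs_eq : (1 / a ^ (1/2 : ℂ) * ∑' n : ℤ,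
        Complex.exp (-(π:ℂ) / a * ((n:ℂ) + Complex.I * b) ^ 2))
        = (((1 / (t/π) ^ ((1:ℝ)/2)) * ∑' n : ℤ,
            Real.exp (-(π^2/t) * ((n:ℝ) - x/(2*π))^2) : ℝ) : ℂ) := by
      have h1 : a ^ (1/2 : ℂ) = (((t/π) ^ ((1:ℝ)/2) : ℝ) : ℂ) := by
        rw [Complex.ofReal_cpow (le_of_lt (div_pos ht hπ))]
        rw [ha_def]; push_cast; ring_nf
      rw [h1, tsum_congr hRHS, ← Complex.ofReal_tsum]
      push_cast
      ring
    have hfinal : η t x = (1 / (t/π) ^ ((1:ℝ)/2)) * ∑' n : ℤ,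
        Real.exp (-(π^2/t) * ((n:ℝ) - x/(2*π))^2) := by
      rw [← hzsum]
      have := congrArg Complex.re (key.trans hrhs_eq)
      rw [Complex.re_tsum hsumG] at this
      simp only [hre] at this
      rw [this, Complex.ofReal_re]
    rw [hfinal]
    exact mul_nonneg (by positivity) hS
  · -- Upper bound
    have hC : (∑' n : ℕ, Real.exp (-t * ((n:ℝ)+1)^2)) ≤ Real.sqrt (π/t) / 2 := by
      apply Real.tsum_le_of_sum_range_le (fun n => (exp_pos _).le)
      intro n
      have hanti : AntitoneOn (fun y : ℝ => Real.exp (-t * y^2)) (Set.Icc 0 (0 + (n:ℝ))) := by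
        intro y₁ h₁ y₂ h₂ h12
        apply Real.exp_le_exp.2
        have h0 : 0 ≤ y₁ := h₁.1
        have hsq : y₁^2 ≤ y₂^2 := pow_le_pow_left₀ h0 h12 2
        nlinarith
      have hle := hanti.sum_le_integral
      have h2 : ∫ y in (0:ℝ)..(0 + (n:ℝ)), Real.exp (-t * y^2)
          ≤ ∫ y in Set.Ioi (0:ℝ), Real.exp (-t * y^2) := by
        rw [zero_add, intervalIntegral.integral_of_le (by positivity : (0:ℝ) ≤ (n:ℝ))]
        apply setIntegral_mono_set (integrableOn_Ioi_exp_neg_mul_sq_iff.2 ht)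
        · exact Filter.Eventually.of_forall (fun y => (exp_pos _).le)
        · exact Filter.Eventually.of_forall (fun y hy => hy.1)
      rw [integral_gaussian_Ioi t] at h2
      calc ∑ i ∈ Finset.range n, Real.exp (-t * ((i:ℝ)+1)^2)
          = ∑ i ∈ Finset.range n, Real.exp (-t * ((0:ℝ) + ((i+1:ℕ):ℝ))^2) := by
            refine Finset.sum_congr rfl (fun i _ => ?_)
            push_cast
            norm_num
        _ ≤ ∫ y in (0:ℝ)..(0 + (n:ℝ)), Real.exp (-t * y^2) := hle
        _ ≤ Real.sqrt (π/t) / 2 := h2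
    have hTle : (∑' n : ℕ, Real.exp (-t * ((n:ℝ)+1)^2) * Real.cos (((n:ℝ)+1) * x))
        ≤ ∑' n : ℕ, Real.exp (-t * ((n:ℝ)+1)^2) := by
      refine Summable.tsum_le_tsum (fun n => ?_) hsumT hsumg1
      calc Real.exp (-t * ((n:ℝ)+1)^2) * Real.cos (((n:ℝ)+1) * x)
          ≤ Real.exp (-t * ((n:ℝ)+1)^2) * 1 :=
            mul_le_mul_of_nonneg_left (Real.cos_le_one _) (exp_pos _).le
        _ = _ := mul_one _
    rw [hη t x]
    have h3 := hTle.trans hC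
    linarith
end

section
/- (Grönwall-type inequality with singular kernel, case p = ∞) Let φ ∈ L^∞([0,T]) be nonnegative, c₁ ∈ L^∞([0,T]) nonnegative, and c₀ ∈ L^∞([0,T]) nonnegative and nondecreasing. Suppose φ(t) ≤ c₀(t) + ∫₀ᵗ ((t-s)^{-1/2} + 1) c₁(s) φ(s) ds for a.e. t ∈ [0,T]. Then there is a positive nondecreasing continuous function M : ℝ₊² → [1, ∞) depending on nothing else, such that φ(t) ≤ c₀(t)·M(‖c₁‖_{L^∞(0,t)}, t) for a.e. t ∈ [0,T]. -/
open Real MeasureTheory Set intervalIntegral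

private lemma meas_rpow_half : Measurable (fun x : ℝ => x ^ (-(1/2) : ℝ)) := by
  apply measurable_of_continuousOn_compl_singleton (0:ℝ)
  intro x hx
  exact (Real.continuousAt_rpow_const x _ (Or.inl hx)).continuousWithinAt

private lemma II_g {lam : ℝ} (hlam : 0 ≤ lam) {a b : ℝ} (ha : 0 ≤ a) (hb : 0 ≤ b) :
    IntervalIntegrable (fun v : ℝ => v ^ (-(1/2) : ℝ) * exp (-(lam*v))) volume a b := by
  apply IntervalIntegrable.mono_fun' (g := fun v : ℝ => v ^ (-(1/2) : ℝ))
    (intervalIntegrable_rpow' (by norm_num))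
  · exact (meas_rpow_half.mul ((measurable_const.mul measurable_id).neg.exp)).aestronglyMeasurable
  · filter_upwards [ae_restrict_mem measurableSet_uIoc] with v hv
    have hv0 : 0 ≤ v := le_of_lt (lt_of_le_of_lt (le_min ha hb) hv.1)
    have h1 : 0 ≤ v ^ (-(1/2) : ℝ) := Real.rpow_nonneg hv0 _
    have h2 : exp (-(lam*v)) ≤ 1 := by
      rw [Real.exp_le_one_iff]; nlinarith
    rw [Real.norm_eq_abs, abs_of_nonneg (by positivity)]
    nlinarith

private lemma II_f {lam s : ℝ} (hlam : 0 ≤ lam) (hs : 0 ≤ s) :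
    IntervalIntegrable (fun v : ℝ => (v ^ (-(1/2) : ℝ) + 1) * exp (-(lam*v))) volume 0 s := by
  have hIh : IntervalIntegrable (fun v : ℝ => exp (-(lam*v))) volume 0 s :=
    (Real.continuous_exp.comp (continuous_const.mul continuous_id).neg).intervalIntegrable _ _
  simpa only [add_mul, one_mul] using (II_g hlam le_rfl hs).add hIh

private lemma II_K {s : ℝ} (hs : 0 ≤ s) :
    IntervalIntegrable (fun u : ℝ => (s-u) ^ (-(1/2) : ℝ) + 1) volume 0 s := by
  have base : IntervalIntegrable (fun v : ℝ => v ^ (-(1/2):ℝ) + 1) volume 0 s :=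
    (intervalIntegrable_rpow' (by norm_num)).add intervalIntegrable_const
  simpa using (base.comp_sub_left s).symm

private lemma exp_int_bound {lam s : ℝ} (hlam : 0 < lam) (hs : 0 ≤ s) :
    ∫ v in (0:ℝ)..s, exp (-(lam*v)) ≤ 1/lam := by
  have hd : ∀ v ∈ uIcc (0:ℝ) s, HasDerivAt (fun v => -(exp (-(lam*v)) / lam)) (exp (-(lam*v))) v := by
    intro v _
    have h1 : HasDerivAt (fun v : ℝ => -(lam*v)) (-lam) v := by
      have := ((hasDerivAt_id v).const_mul lam).neg
      rw [mul_one] at this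
      exact this
    have h2 := (Real.hasDerivAt_exp (-(lam*v))).comp v h1
    have h3 := (h2.div_const lam).neg
    refine h3.congr_deriv ?_
    field_simp
  have hint : IntervalIntegrable (fun v : ℝ => exp (-(lam*v))) volume 0 s :=
    (Real.continuous_exp.comp (continuous_const.mul continuous_id).neg).intervalIntegrable _ _
  rw [integral_eq_sub_of_hasDerivAt hd hint]
  have : 0 < exp (-(lam*s)) := Real.exp_pos _
  simp only [mul_zero, neg_zero, Real.exp_zero]
  rw [div_eq_mul_inv, one_div]
  nlinarith [mul_pos (Real.exp_pos (-(lam*s))) (inv_pos.mpr hlam), inv_pos.mpr hlam]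

private lemma sing_int {c : ℝ} (hc : 0 ≤ c) :
    ∫ v in (0:ℝ)..c, v ^ (-(1/2) : ℝ) = 2 * c ^ ((1:ℝ)/2) := by
  rw [integral_rpow (Or.inl (by norm_num))]
  norm_num
  ring

private lemma ker_est {lam s : ℝ} (hlam : 1 ≤ lam) (hs : 0 ≤ s) :
    ∫ v in (0:ℝ)..s, (v ^ (-(1/2) : ℝ) + 1) * exp (-(lam * v)) ≤ 5 / Real.sqrt lam := by
  have hl0 : 0 < lam := lt_of_lt_of_le one_pos hlam
  have hsq : 0 < Real.sqrt lam := Real.sqrt_pos.mpr hl0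
  have hsql : Real.sqrt lam * Real.sqrt lam = lam := Real.mul_self_sqrt hl0.le
  have hsqle : Real.sqrt lam ≤ lam := by nlinarith [Real.sqrt_nonneg lam]
  have hIg : IntervalIntegrable (fun v : ℝ => v ^ (-(1/2) : ℝ) * exp (-(lam*v))) volume 0 s :=
    II_g hl0.le le_rfl hs
  have hIh : IntervalIntegrable (fun v : ℝ => exp (-(lam*v))) volume 0 s :=
    (Real.continuous_exp.comp (continuous_const.mul continuous_id).neg).intervalIntegrable _ _
  have hsplit : ∫ v in (0:ℝ)..s, (v ^ (-(1/2) : ℝ) + 1) * exp (-(lam * v))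
      = (∫ v in (0:ℝ)..s, v ^ (-(1/2) : ℝ) * exp (-(lam*v))) + ∫ v in (0:ℝ)..s, exp (-(lam*v)) := by
    rw [← integral_add hIg hIh]
    congr 1; funext v; ring
  rw [hsplit]
  have hexp := exp_int_bound hl0 hs
  have hgbound : (∫ v in (0:ℝ)..s, v ^ (-(1/2) : ℝ) * exp (-(lam*v))) ≤ 4 / Real.sqrt lam := by
    rcases le_or_gt s lam⁻¹ with hcase | hcase
    · have h1 : (∫ v in (0:ℝ)..s, v ^ (-(1/2) : ℝ) * exp (-(lam*v)))
          ≤ ∫ v in (0:ℝ)..s, v ^ (-(1/2) : ℝ) := by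
        apply integral_mono_on hs hIg (intervalIntegrable_rpow' (by norm_num))
        intro v hv
        have h2 : exp (-(lam*v)) ≤ 1 := by
          rw [Real.exp_le_one_iff]; nlinarith [hv.1]
        nlinarith [Real.rpow_nonneg hv.1 (-(1/2) : ℝ)]
      rw [sing_int hs] at h1
      have h3 : s ^ ((1:ℝ)/2) ≤ (lam⁻¹) ^ ((1:ℝ)/2) :=
        Real.rpow_le_rpow hs hcase (by norm_num)
      have h4 : (lam⁻¹) ^ ((1:ℝ)/2) = (Real.sqrt lam)⁻¹ := by
        rw [← Real.sqrt_eq_rpow, Real.sqrt_inv]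
      rw [h4] at h3
      calc _ ≤ 2 * s ^ ((1:ℝ)/2) := h1
        _ ≤ 2 * (Real.sqrt lam)⁻¹ := by linarith
        _ ≤ 4 / Real.sqrt lam := by rw [div_eq_mul_inv]; nlinarith [inv_pos.mpr hsq]
    · set m := lam⁻¹ with hm
      have hm0 : 0 < m := inv_pos.mpr hl0
      have hms : m ≤ s := hcase.le
      have hIg1 : IntervalIntegrable (fun v : ℝ => v ^ (-(1/2) : ℝ) * exp (-(lam*v))) volume 0 m :=
        hIg.mono_set' (by rw [uIoc_of_le hm0.le, uIoc_of_le hs]; exact Ioc_subset_Ioc le_rfl hms)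
      have hIg2 : IntervalIntegrable (fun v : ℝ => v ^ (-(1/2) : ℝ) * exp (-(lam*v))) volume m s :=
        hIg.mono_set' (by rw [uIoc_of_le hms, uIoc_of_le hs]; exact Ioc_subset_Ioc hm0.le le_rfl)
      rw [← integral_add_adjacent_intervals hIg1 hIg2]
      have hp1 : (∫ v in (0:ℝ)..m, v ^ (-(1/2) : ℝ) * exp (-(lam*v))) ≤ 2 / Real.sqrt lam := by
        have h1 : (∫ v in (0:ℝ)..m, v ^ (-(1/2) : ℝ) * exp (-(lam*v)))
            ≤ ∫ v in (0:ℝ)..m, v ^ (-(1/2) : ℝ) := by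
          apply integral_mono_on hm0.le hIg1 (intervalIntegrable_rpow' (by norm_num))
          intro v hv
          have h2 : exp (-(lam*v)) ≤ 1 := by
            rw [Real.exp_le_one_iff]; nlinarith [hv.1]
          nlinarith [Real.rpow_nonneg hv.1 (-(1/2) : ℝ)]
        rw [sing_int hm0.le] at h1
        have h4 : m ^ ((1:ℝ)/2) = (Real.sqrt lam)⁻¹ := by
          rw [hm, ← Real.sqrt_eq_rpow, Real.sqrt_inv]
        rw [h4] at h1
        calc _ ≤ 2 * (Real.sqrt lam)⁻¹ := h1
          _ = 2 / Real.sqrt lam := by rw [div_eq_mul_inv]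
      have hp2 : (∫ v in m..s, v ^ (-(1/2) : ℝ) * exp (-(lam*v))) ≤ 2 / Real.sqrt lam := by
        have hnot : (0:ℝ) ∉ uIcc m s := by
          rw [uIcc_of_le hms]; intro h; exact absurd h.1 (not_le.mpr hm0)
        have hII32 : IntervalIntegrable (fun v : ℝ => v ^ (-(3/2) : ℝ)) volume m s :=
          intervalIntegrable_rpow (Or.inr hnot)
        have h1 : (∫ v in m..s, v ^ (-(1/2) : ℝ) * exp (-(lam*v)))
            ≤ ∫ v in m..s, lam⁻¹ * v ^ (-(3/2) : ℝ) := by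
          apply integral_mono_on hms hIg2 (hII32.const_mul _)
          intro v hv
          have hv0 : 0 < v := lt_of_lt_of_le hm0 hv.1
          have h2 : exp (-(lam*v)) ≤ (lam*v)⁻¹ := by
            rw [Real.exp_neg]
            apply inv_anti₀ (by positivity)
            linarith [Real.add_one_le_exp (lam*v)]
          have hvv : v ^ (-(1/2) : ℝ) * v⁻¹ = v ^ (-(3/2) : ℝ) := by
            rw [← Real.rpow_neg_one v, ← Real.rpow_add hv0]; norm_num
          calc v ^ (-(1/2) : ℝ) * exp (-(lam*v)) ≤ v ^ (-(1/2) : ℝ) * (lam*v)⁻¹ :=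
                mul_le_mul_of_nonneg_left h2 (Real.rpow_nonneg hv0.le _)
            _ = (v ^ (-(1/2) : ℝ) * v⁻¹) * lam⁻¹ := by rw [mul_inv]; ring
            _ = lam⁻¹ * v ^ (-(3/2) : ℝ) := by rw [hvv]; ring
        rw [intervalIntegral.integral_const_mul, integral_rpow (Or.inr ⟨by norm_num, hnot⟩)] at h1
        have hcomp : (s ^ (-(3/2) + 1 : ℝ) - m ^ (-(3/2) + 1 : ℝ)) / (-(3/2) + 1)
            = 2 * (m ^ (-(1/2) : ℝ) - s ^ (-(1/2) : ℝ)) := by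
          norm_num
          ring
        rw [hcomp] at h1
        have h5 : m ^ (-(1/2) : ℝ) = Real.sqrt lam := by
          rw [hm, ← Real.rpow_neg_one lam, ← Real.rpow_mul hl0.le, Real.sqrt_eq_rpow]
          norm_num
        rw [h5] at h1
        have hx : 0 ≤ s ^ (-(1/2):ℝ) := Real.rpow_nonneg hs _
        have hls : lam⁻¹ * Real.sqrt lam = (Real.sqrt lam)⁻¹ := by
          rw [← hsql]; field_simp; rw [Real.sqrt_sq hsq.le]
        have hfin : lam⁻¹ * (2 * (Real.sqrt lam - s ^ (-(1/2):ℝ))) ≤ 2 / Real.sqrt lam := by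
          have h0 : 0 ≤ lam⁻¹ * s^(-(1/2):ℝ) := mul_nonneg (inv_nonneg.mpr hl0.le) hx
          have e1 : lam⁻¹ * (2 * (Real.sqrt lam - s ^ (-(1/2):ℝ)))
              = 2*(lam⁻¹ * Real.sqrt lam) - 2*(lam⁻¹ * s ^ (-(1/2):ℝ)) := by ring
          have e2 : 2 / Real.sqrt lam = 2 * (Real.sqrt lam)⁻¹ := div_eq_mul_inv 2 _
          rw [e1, e2, hls]
          linarith
        linarith
      calc (∫ v in (0:ℝ)..m, v ^ (-(1/2) : ℝ) * exp (-(lam*v)))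
            + ∫ v in m..s, v ^ (-(1/2) : ℝ) * exp (-(lam*v))
          ≤ 2 / Real.sqrt lam + 2 / Real.sqrt lam := add_le_add hp1 hp2
        _ = 4 / Real.sqrt lam := by ring
  have hll : 1/lam ≤ 1/Real.sqrt lam := one_div_le_one_div_of_le hsq hsqle
  calc (∫ v in (0:ℝ)..s, v ^ (-(1/2) : ℝ) * exp (-(lam*v))) + ∫ v in (0:ℝ)..s, exp (-(lam*v))
      ≤ 4 / Real.sqrt lam + 1 / Real.sqrt lam := add_le_add hgbound (hexp.trans hll)
    _ = 5 / Real.sqrt lam := by ring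

private lemma ker_comp {lam s : ℝ} (hlam : 1 ≤ lam) (hs : 0 ≤ s) :
    IntervalIntegrable (fun u : ℝ => ((s-u) ^ (-(1/2):ℝ) + 1) * exp (lam*u)) volume 0 s ∧
    ∫ u in (0:ℝ)..s, ((s-u) ^ (-(1/2):ℝ) + 1) * exp (lam*u)
      ≤ exp (lam*s) * (5 / Real.sqrt lam) := by
  have hl0 : 0 < lam := lt_of_lt_of_le one_pos hlam
  set F : ℝ → ℝ := fun v => (v ^ (-(1/2):ℝ) + 1) * exp (lam*(s-v)) with hF
  have hFeq : F = fun v => exp (lam*s) * ((v ^ (-(1/2):ℝ) + 1) * exp (-(lam*v))) := by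
    funext v
    show (v ^ (-(1/2):ℝ) + 1) * exp (lam*(s-v)) = _
    have h : exp (lam*(s-v)) = exp (lam*s) * exp (-(lam*v)) := by
      rw [← Real.exp_add]; ring_nf
    rw [h]; ring
  have hIIF : IntervalIntegrable F volume 0 s := by
    rw [hFeq]; exact (II_f hl0.le hs).const_mul _
  have hintF : ∫ v in (0:ℝ)..s, F v ≤ exp (lam*s) * (5 / Real.sqrt lam) := by
    rw [hFeq]
    rw [intervalIntegral.integral_const_mul]
    exact mul_le_mul_of_nonneg_left (ker_est hlam hs) (Real.exp_pos _).le
  have hcomp : (fun u : ℝ => ((s-u) ^ (-(1/2):ℝ) + 1) * exp (lam*u)) = fun u => F (s-u) := by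
    funext u
    show _ = (((s-u) : ℝ) ^ (-(1/2):ℝ) + 1) * exp (lam*(s-(s-u)))
    rw [sub_sub_cancel]
  constructor
  · rw [hcomp]
    simpa using (hIIF.comp_sub_left s).symm
  · rw [hcomp, integral_comp_sub_left F s]
    simpa using hintF

/-- Grönwall-type inequality with the singular kernel `(t-s)^{-1/2} + 1`, case `p = ∞`:
if nonnegative bounded `φ` satisfies
`φ(t) ≤ c₀(t) + ∫₀ᵗ ((t-s)^{-1/2} + 1) c₁(s) φ(s) ds` for a.e. `t ∈ [0,T]`,
with `c₁ ∈ L^∞` nonnegative and `c₀ ∈ L^∞` nonnegative nondecreasing, then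
`φ(t) ≤ c₀(t) · M(‖c₁‖_{L^∞(0,t)}, t)` a.e., for a universal positive nondecreasing
continuous function `M : ℝ₊² → [1,∞)`. -/
theorem gronwall_singular_kernel_Linfty :
    ∃ M : ℝ → ℝ → ℝ,
      (∀ a t, 0 ≤ a → 0 ≤ t → 1 ≤ M a t) ∧
      (∀ t, MonotoneOn (fun a => M a t) (Ici 0)) ∧
      (∀ a, MonotoneOn (M a) (Ici 0)) ∧
      ContinuousOn (fun q : ℝ × ℝ => M q.1 q.2) (Ici 0 ×ˢ Ici 0) ∧
      ∀ (T : ℝ) (_ : 0 < T) (φ c₀ c₁ : ℝ → ℝ),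
        Measurable φ → Measurable c₀ → Measurable c₁ →
        (∀ t ∈ Icc 0 T, 0 ≤ φ t) → (∃ C, ∀ t ∈ Icc 0 T, φ t ≤ C) →
        (∀ t ∈ Icc 0 T, 0 ≤ c₁ t) → (∃ C, ∀ t ∈ Icc 0 T, c₁ t ≤ C) →
        (∀ t ∈ Icc 0 T, 0 ≤ c₀ t) → (∃ C, ∀ t ∈ Icc 0 T, c₀ t ≤ C) →
        MonotoneOn c₀ (Icc 0 T) →
        (∀ᵐ t ∂(volume.restrict (Icc 0 T)),
          φ t ≤ c₀ t + ∫ s in (0 : ℝ)..t, ((t - s) ^ (-(1/2) : ℝ) + 1) * (c₁ s * φ s)) →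
        ∀ᵐ t ∂(volume.restrict (Icc 0 T)),
          φ t ≤ c₀ t *
            M ((eLpNorm ((Icc (0 : ℝ) t).indicator c₁) ⊤ volume).toReal) t := by
  classical
  refine ⟨fun a t => 1 + Real.exp ((1 + 100*a^2) * max t 0), ?_, ?_, ?_, ?_, ?_⟩
  · intro a t _ _
    dsimp only
    have := Real.exp_pos ((1 + 100*a^2) * max t 0)
    linarith
  · intro t a ha b hb hab
    have ha' : (0:ℝ) ≤ a := ha
    dsimp only
    have : (1 + 100*a^2) * max t 0 ≤ (1 + 100*b^2) * max t 0 :=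
      mul_le_mul_of_nonneg_right (by nlinarith) (le_max_right t 0)
    linarith [Real.exp_le_exp.mpr this]
  · intro a t₁ _ t₂ _ h12
    dsimp only
    have : (1 + 100*a^2) * max t₁ 0 ≤ (1 + 100*a^2) * max t₂ 0 :=
      mul_le_mul_of_nonneg_left (max_le_max h12 le_rfl) (by positivity)
    linarith [Real.exp_le_exp.mpr this]
  · apply Continuous.continuousOn
    have h1 : Continuous fun q : ℝ × ℝ => (1 + 100*q.1^2) * max q.2 0 :=
      (continuous_const.add (continuous_const.mul ((continuous_pow 2).comp continuous_fst))).mul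
        (continuous_snd.max continuous_const)
    exact continuous_const.add (Real.continuous_exp.comp h1)
  intro T hT φ c₀ c₁ hφm hc₀m hc₁m hφ0 hφbd hc₁0 hc₁bd hc₀0 hc₀bd hc₀mono hyp
  obtain ⟨Cφ, hCφ⟩ := hφbd
  obtain ⟨C₁, hC₁⟩ := hc₁bd
  filter_upwards [hyp, ae_restrict_mem measurableSet_Icc] with t hypt htT
  have ht0 : 0 ≤ t := htT.1
  have htT2 : t ≤ T := htT.2
  set aa : ℝ := (eLpNorm ((Icc (0:ℝ) t).indicator c₁) ⊤ volume).toReal with haa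
  have haa0 : 0 ≤ aa := ENNReal.toReal_nonneg
  set lam : ℝ := 1 + 100 * aa^2 with hlamdef
  have hlam1 : 1 ≤ lam := by nlinarith
  have hl0 : 0 < lam := lt_of_lt_of_le one_pos hlam1
  have hsq : 0 < Real.sqrt lam := Real.sqrt_pos.mpr hl0
  have hhalf : aa * (5 / Real.sqrt lam) ≤ 1/2 := by
    have h10 : 10*aa ≤ Real.sqrt lam := by
      rw [← Real.sqrt_sq (by positivity : (0:ℝ) ≤ 10*aa)]
      exact Real.sqrt_le_sqrt (by nlinarith)
    have hinv : 0 < (Real.sqrt lam)⁻¹ := inv_pos.mpr hsq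
    have h2 : 10*aa*(Real.sqrt lam)⁻¹ ≤ 1 := by
      calc 10*aa*(Real.sqrt lam)⁻¹ ≤ Real.sqrt lam * (Real.sqrt lam)⁻¹ :=
            mul_le_mul_of_nonneg_right h10 hinv.le
        _ = 1 := mul_inv_cancel₀ (ne_of_gt hsq)
    rw [div_eq_mul_inv]
    nlinarith
  -- a.e. bound of c₁ on [0,t]
  have hfin : eLpNorm ((Icc (0:ℝ) t).indicator c₁) ⊤ volume ≤ ENNReal.ofReal (max C₁ 0) := by
    rw [eLpNorm_exponent_top]
    apply eLpNormEssSup_le_of_ae_bound (C := max C₁ 0)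
    filter_upwards with x
    by_cases hx : x ∈ Icc (0:ℝ) t
    · rw [indicator_of_mem hx]
      have hxT : x ∈ Icc (0:ℝ) T := ⟨hx.1, hx.2.trans htT2⟩
      rw [Real.norm_eq_abs, abs_of_nonneg (hc₁0 x hxT)]
      exact le_max_of_le_left (hC₁ x hxT)
    · rw [indicator_of_notMem hx]
      simpa using le_max_right C₁ 0
  have hne : eLpNorm ((Icc (0:ℝ) t).indicator c₁) ⊤ volume ≠ ⊤ :=
    (lt_of_le_of_lt hfin ENNReal.ofReal_lt_top).ne
  have hc₁le : ∀ᵐ u ∂(volume : Measure ℝ), u ∈ Icc (0:ℝ) t → c₁ u ≤ aa := by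
    filter_upwards [ae_le_eLpNormEssSup (f := (Icc (0:ℝ) t).indicator c₁) (μ := volume)]
      with u hu hmem
    have h1 : (‖((Icc (0:ℝ) t).indicator c₁) u‖₊ : ENNReal)
        ≤ eLpNorm ((Icc (0:ℝ) t).indicator c₁) ⊤ volume := by
      rw [eLpNorm_exponent_top]; exact hu
    have h2 := ENNReal.toReal_mono hne h1
    rw [ENNReal.coe_toReal, coe_nnnorm] at h2
    rw [indicator_of_mem hmem, Real.norm_eq_abs] at h2
    exact le_trans (le_abs_self _) h2
  -- essential supremum of e^{-lam u} φ u on [0,t]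
  set N' : ENNReal := essSup (fun u => ENNReal.ofReal (exp (-(lam*u)) * φ u))
      (volume.restrict (Icc (0:ℝ) t)) with hN'
  have hN'le : N' ≤ ENNReal.ofReal (max Cφ 0) := by
    refine essSup_le_of_ae_le _ ?_
    filter_upwards [ae_restrict_mem measurableSet_Icc] with u hu
    apply ENNReal.ofReal_le_ofReal
    have huT : u ∈ Icc (0:ℝ) T := ⟨hu.1, hu.2.trans htT2⟩
    have h1 : exp (-(lam*u)) ≤ 1 := by
      rw [Real.exp_le_one_iff]; nlinarith [hu.1]
    have h2 := hφ0 u huT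
    have h3 := hCφ u huT
    have := Real.exp_pos (-(lam*u))
    nlinarith [le_max_left Cφ (0:ℝ)]
  have hN'top : N' ≠ ⊤ := (lt_of_le_of_lt hN'le ENNReal.ofReal_lt_top).ne
  set N : ℝ := N'.toReal with hN
  have hN0 : 0 ≤ N := ENNReal.toReal_nonneg
  have hφle : ∀ᵐ u ∂(volume.restrict (Icc (0:ℝ) t)), φ u ≤ exp (lam*u) * N := by
    filter_upwards [ENNReal.ae_le_essSup (fun u => ENNReal.ofReal (exp (-(lam*u)) * φ u))
      (μ := volume.restrict (Icc (0:ℝ) t)), ae_restrict_mem measurableSet_Icc] with u hu hmem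
    have huT : u ∈ Icc (0:ℝ) T := ⟨hmem.1, hmem.2.trans htT2⟩
    have h2 := ENNReal.toReal_mono hN'top hu
    rw [ENNReal.toReal_ofReal (mul_nonneg (Real.exp_pos _).le (hφ0 u huT))] at h2
    have h3 := mul_le_mul_of_nonneg_left h2 (Real.exp_pos (lam*u)).le
    have he : exp (lam*u) * (exp (-(lam*u)) * φ u) = φ u := by
      rw [← mul_assoc, ← Real.exp_add]; simp
    rw [he] at h3
    exact h3
  -- the key pointwise estimate
  have key : ∀ s, 0 ≤ s → s ≤ t →
      φ s ≤ c₀ s + ∫ u in (0:ℝ)..s, ((s-u) ^ (-(1/2):ℝ) + 1) * (c₁ u * φ u) →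
      φ s ≤ c₀ t + N/2 * exp (lam*s) := by
    intro s hs0 hst hineq
    obtain ⟨IIcomp, Icompb⟩ := ker_comp hlam1 hs0
    set Db : ℝ := max C₁ 0 * max Cφ 0 with hDb
    have hsub : Icc (0:ℝ) s ⊆ Icc (0:ℝ) t := Icc_subset_Icc le_rfl hst
    have hIK : IntervalIntegrable (fun u : ℝ => ((s-u) ^ (-(1/2):ℝ) + 1) * Db) volume 0 s :=
      (II_K hs0).mul_const _
    have hILHS : IntervalIntegrable
        (fun u : ℝ => ((s-u) ^ (-(1/2):ℝ) + 1) * (c₁ u * φ u)) volume 0 s := by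
      apply hIK.mono_fun'
      · exact (((meas_rpow_half.comp (measurable_const.sub measurable_id)).add
          measurable_const).mul (hc₁m.mul hφm)).aestronglyMeasurable
      · filter_upwards [ae_restrict_mem measurableSet_uIoc] with u hu
        rw [uIoc_of_le hs0] at hu
        have huT : u ∈ Icc (0:ℝ) T := ⟨hu.1.le, hu.2.trans (hst.trans htT2)⟩
        have hK0 : 0 ≤ (s-u) ^ (-(1/2):ℝ) + 1 :=
          add_nonneg (Real.rpow_nonneg (by linarith [hu.2]) _) zero_le_one
        have hc1u : 0 ≤ c₁ u := hc₁0 u huT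
        have hφu : 0 ≤ φ u := hφ0 u huT
        rw [Real.norm_eq_abs, abs_of_nonneg (mul_nonneg hK0 (mul_nonneg hc1u hφu))]
        apply mul_le_mul_of_nonneg_left _ hK0
        calc c₁ u * φ u ≤ max C₁ 0 * max Cφ 0 :=
              mul_le_mul (le_max_of_le_left (hC₁ u huT)) (le_max_of_le_left (hCφ u huT))
                hφu (le_max_right _ _)
          _ = Db := hDb.symm
    have hmono : (∫ u in (0:ℝ)..s, ((s-u) ^ (-(1/2):ℝ) + 1) * (c₁ u * φ u))
        ≤ ∫ u in (0:ℝ)..s, (aa*N) * (((s-u) ^ (-(1/2):ℝ) + 1) * exp (lam*u)) := by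
      apply integral_mono_ae_restrict hs0 hILHS (IIcomp.const_mul _)
      filter_upwards [ae_restrict_of_ae hc₁le,
        ae_mono (Measure.restrict_mono hsub le_rfl) hφle,
        ae_restrict_mem measurableSet_Icc] with u hc1 hφu hmem
      have hut : u ∈ Icc (0:ℝ) t := hsub hmem
      have huT : u ∈ Icc (0:ℝ) T := ⟨hmem.1, (hmem.2.trans hst).trans htT2⟩
      have hK0 : 0 ≤ (s-u) ^ (-(1/2):ℝ) + 1 :=
        add_nonneg (Real.rpow_nonneg (by linarith [hmem.2]) _) zero_le_one
      have h1 : c₁ u * φ u ≤ aa * (exp (lam*u) * N) :=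
        mul_le_mul (hc1 hut) hφu (hφ0 u huT) haa0
      calc ((s-u) ^ (-(1/2):ℝ) + 1) * (c₁ u * φ u)
          ≤ ((s-u) ^ (-(1/2):ℝ) + 1) * (aa * (exp (lam*u) * N)) :=
            mul_le_mul_of_nonneg_left h1 hK0
        _ = (aa*N) * (((s-u) ^ (-(1/2):ℝ) + 1) * exp (lam*u)) := by ring
    rw [intervalIntegral.integral_const_mul] at hmono
    have h2 : (aa*N) * ∫ u in (0:ℝ)..s, ((s-u) ^ (-(1/2):ℝ) + 1) * exp (lam*u)
        ≤ (aa*N) * (exp (lam*s) * (5 / Real.sqrt lam)) :=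
      mul_le_mul_of_nonneg_left Icompb (mul_nonneg haa0 hN0)
    have h3 : (aa*N) * (exp (lam*s) * (5 / Real.sqrt lam)) ≤ N/2 * exp (lam*s) := by
      have h4 : aa*(5/Real.sqrt lam) * (N * exp (lam*s)) ≤ (1/2) * (N * exp (lam*s)) :=
        mul_le_mul_of_nonneg_right hhalf (mul_nonneg hN0 (Real.exp_pos _).le)
      calc (aa*N) * (exp (lam*s) * (5 / Real.sqrt lam))
          = aa*(5/Real.sqrt lam) * (N * exp (lam*s)) := by ring
        _ ≤ (1/2) * (N * exp (lam*s)) := h4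
        _ = N/2 * exp (lam*s) := by ring
    have hc₀le : c₀ s ≤ c₀ t := hc₀mono ⟨hs0, hst.trans htT2⟩ htT hst
    linarith
  -- bootstrap: N ≤ 2 c₀ t
  have hNle : N ≤ 2 * c₀ t := by
    have hc0t : 0 ≤ c₀ t := hc₀0 t htT
    have hae : (fun u => ENNReal.ofReal (exp (-(lam*u)) * φ u))
        ≤ᵐ[volume.restrict (Icc (0:ℝ) t)] fun _ => ENNReal.ofReal (c₀ t + N/2) := by
      filter_upwards [ae_mono (Measure.restrict_mono (Icc_subset_Icc le_rfl htT2) le_rfl) hyp,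
        ae_restrict_mem measurableSet_Icc] with u hu hmem
      have hk := key u hmem.1 hmem.2 hu
      apply ENNReal.ofReal_le_ofReal
      have huT : u ∈ Icc (0:ℝ) T := ⟨hmem.1, hmem.2.trans htT2⟩
      have he1 : exp (-(lam*u)) ≤ 1 := by rw [Real.exp_le_one_iff]; nlinarith [hmem.1]
      have he2 : exp (-(lam*u)) * exp (lam*u) = 1 := by rw [← Real.exp_add]; simp
      have hep := (Real.exp_pos (-(lam*u))).le
      nlinarith [hφ0 u huT, mul_le_mul_of_nonneg_left hk hep]
    have h1 := essSup_le_of_ae_le _ hae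
    have h2 := ENNReal.toReal_mono ENNReal.ofReal_ne_top h1
    rw [ENNReal.toReal_ofReal (by linarith : (0:ℝ) ≤ c₀ t + N/2)] at h2
    linarith [h2]
  -- conclusion at time t
  have hk := key t ht0 le_rfl hypt
  have hc0t : 0 ≤ c₀ t := hc₀0 t htT
  rw [max_eq_left ht0]
  nlinarith [mul_le_mul_of_nonneg_right
    (by linarith : N/2 ≤ c₀ t) (Real.exp_pos (lam*t)).le]
end
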